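/- arXiv:2004.05206 — 3 statements merged into one kernel-verified Lean document; each statement's English description precedes it below -/
import Mathlib

section
/- Let 0<p<1. For every ε>0 and every f ∈ ℓ_p, Σ_j |f(j)| ≤ max{ ε^{−p/(1−p)} · sup_j |f(j)| , ε · ‖f‖_p }. (That is, the unit vector system of ℓ_p is strongly absolute with strongly absolute function A(ε) ≤ ε^{−p/(1−p)}.) -/
open scoped BigOperators

/-- For `0 < p < 1`, membership in `ℓ_p`: the sequence `(|f j|^p)_j` is summable. -/
def MemLpSeq (p : ℝ) (f : ℕ → ℝ) : Prop := Summable fun j => |f j| ^ p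

/-- The `p`-norm `‖f‖_p = (∑_j |f j|^p)^(1/p)`. -/
noncomputable def pNorm (p : ℝ) (f : ℕ → ℝ) : ℝ := (∑' j, |f j| ^ p) ^ (1 / p)

/-- The unit vector system of `ℓ_p`, `0<p<1`, is strongly absolute with
strongly absolute function `A(ε) ≤ ε^(-p/(1-p))`:
`∑_j |f j| ≤ max (ε^(-p/(1-p)) · sup_j |f j|) (ε · ‖f‖_p)`. -/
theorem stmt1 (p : ℝ) (hp0 : 0 < p) (hp1 : p < 1) (ε : ℝ) (hε : 0 < ε)
    (f : ℕ → ℝ) (hf : MemLpSeq p f) :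
    ∑' j, |f j| ≤ max (ε ^ (-(p / (1 - p))) * ⨆ j, |f j|) (ε * pNorm p f) := by
  have h1p : (0:ℝ) < 1 - p := by linarith
  set q := p / (1 - p) with hqdef
  have hq : 0 < q := div_pos hp0 h1p
  set M := ⨆ j, |f j| with hMdef
  set S := ∑' j, |f j| ^ p with hSdef
  have hS0 : 0 ≤ S := tsum_nonneg fun j => Real.rpow_nonneg (abs_nonneg _) _
  have hle : ∀ j, |f j| ^ p ≤ S := fun j =>
    Summable.le_tsum hf j fun _ _ => Real.rpow_nonneg (abs_nonneg _) _
  have hbdd : BddAbove (Set.range fun j => |f j|) := by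
    refine ⟨S ^ (1/p), ?_⟩
    rintro x ⟨j, rfl⟩
    show |f j| ≤ S ^ (1/p)
    have h1 : |f j| = (|f j| ^ p) ^ (1/p) := by
      rw [← Real.rpow_mul (abs_nonneg _), mul_one_div_cancel hp0.ne', Real.rpow_one]
    rw [h1]
    exact Real.rpow_le_rpow (Real.rpow_nonneg (abs_nonneg _) _) (hle j) (by positivity)
  have hjM : ∀ j, |f j| ≤ M := fun j => le_ciSup hbdd j
  have hM0 : 0 ≤ M := (abs_nonneg (f 0)).trans (hjM 0)
  have key : ∀ j, |f j| ≤ M ^ (1 - p) * |f j| ^ p := by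
    intro j
    rcases eq_or_lt_of_le (abs_nonneg (f j)) with h | h
    · rw [← h, Real.zero_rpow hp0.ne', mul_zero]
    · have h2 : |f j| = |f j| ^ (1 - p) * |f j| ^ p := by
        rw [← Real.rpow_add h, sub_add_cancel, Real.rpow_one]
      conv_lhs => rw [h2]
      exact mul_le_mul_of_nonneg_right
        (Real.rpow_le_rpow (abs_nonneg _) (hjM j) h1p.le)
        (Real.rpow_nonneg (abs_nonneg _) _)
  have hsummable : Summable fun j => |f j| :=
    Summable.of_nonneg_of_le (fun j => abs_nonneg _) key (hf.mul_left _)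
  have htsum : ∑' j, |f j| ≤ M ^ (1 - p) * S := by
    calc ∑' j, |f j| ≤ ∑' j, M ^ (1 - p) * |f j| ^ p :=
          Summable.tsum_le_tsum key hsummable (hf.mul_left _)
      _ = M ^ (1 - p) * S := tsum_mul_left
  have hpN : pNorm p f = S ^ (1/p) := by rw [pNorm, ← hSdef]
  by_cases hc : M ^ (1 - p) * S ≤ ε * S ^ (1/p)
  · refine le_max_of_le_right ?_
    rw [hpN]
    exact htsum.trans hc
  · push_neg at hc
    have hSpos : 0 < S := by
      rcases hS0.eq_or_lt with h | h
      · exfalso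
        rw [← h, mul_zero] at hc
        have : (0:ℝ) ≤ ε * (0:ℝ) ^ (1/p) := by positivity
        linarith
      · exact h
    have hMpos : 0 < M := by
      rcases hM0.eq_or_lt with h | h
      · exfalso
        rw [← h, Real.zero_rpow h1p.ne', zero_mul] at hc
        have : (0:ℝ) ≤ ε * S ^ (1/p) := by positivity
        linarith
      · exact h
    have hB : (ε * S ^ (1/p)) ^ q < (M ^ (1 - p) * S) ^ q :=
      Real.rpow_lt_rpow (by positivity) hc hq
    rw [Real.mul_rpow hε.le (Real.rpow_nonneg hS0 _),
        Real.mul_rpow (Real.rpow_nonneg hM0 _) hS0,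
        ← Real.rpow_mul hS0, ← Real.rpow_mul hM0] at hB
    have hqq : q * (1 - p) = p := by rw [hqdef]; exact div_mul_cancel₀ p h1p.ne'
    have e1 : (1/p) * q = q + 1 := by
      field_simp [hqdef]
      linear_combination hqq
    have e2 : (1 - p) * q = p := by
      field_simp [hqdef]
      linear_combination hqq
    rw [e1, e2, Real.rpow_add hSpos, Real.rpow_one] at hB
    -- hB : ε ^ q * (S ^ q * S) < M ^ p * S ^ q
    have hSq : 0 < S ^ q := Real.rpow_pos_of_pos hSpos _
    have hεq : 0 < ε ^ q := Real.rpow_pos_of_pos hε _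
    have hS_lt : S < ε ^ (-q) * M ^ p := by
      have h3 : ε ^ q * S < M ^ p := by
        rw [← mul_lt_mul_iff_of_pos_right hSq]
        linear_combination hB
      rw [Real.rpow_neg hε.le]
      rw [← lt_div_iff₀' hεq] at h3
      rwa [div_eq_inv_mul] at h3
    refine le_max_of_le_left ?_
    calc ∑' j, |f j| ≤ M ^ (1 - p) * S := htsum
      _ ≤ M ^ (1 - p) * (ε ^ (-q) * M ^ p) := by
          apply mul_le_mul_of_nonneg_left hS_lt.le (Real.rpow_nonneg hM0 _)
      _ = ε ^ (-q) * (M ^ (1 - p) * M ^ p) := by ring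
      _ = ε ^ (-q) * M := by
          rw [← Real.rpow_add hMpos, sub_add_cancel, Real.rpow_one]
end

section
/- Let 0<p<1, a,b>0 and C>1. Set ε := (C−1)/(C·a·b) and δ := ((C−1)/C)·ε^{p/(1−p)}. Let A ⊆ ℕ be finite, and for each n ∈ A let x_n ∈ ℓ_p with ‖x_n‖_p ≤ a and let x_n* be a bounded linear functional on ℓ_p with ‖x_n*‖ ≤ b and x_n*(x_n) = 1. Let Ω := { j ∈ ℕ : there is n ∈ A with |x_n*(e_j)·x_n(j)| ≥ δ }. Then |A| ≤ C · Σ_{j∈Ω} | Σ_{n∈A} x_n*(e_j)·x_n(j) |. -/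
open scoped BigOperators

/-- The unit vector system `e_j` of `ℓ_p`. -/
noncomputable def unitVec (j : ℕ) : ℕ → ℝ := fun i => if i = j then 1 else 0

open Filter Topology

lemma memLpSeq_of_le {p : ℝ} (hp0 : 0 < p) {f g : ℕ → ℝ} (h : ∀ i, |f i| ≤ |g i|)
    (hg : MemLpSeq p g) : MemLpSeq p f := by
  refine Summable.of_nonneg_of_le (fun i => Real.rpow_nonneg (abs_nonneg _) _) (fun i => ?_) hg
  exact Real.rpow_le_rpow (abs_nonneg _) (h i) hp0.le

lemma memLpSeq_zero {p : ℝ} (hp0 : 0 < p) : MemLpSeq p (fun _ => 0) := by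
  unfold MemLpSeq
  simp [Real.zero_rpow hp0.ne']

lemma unitVec_memLp {p : ℝ} (hp0 : 0 < p) (j : ℕ) : MemLpSeq p (unitVec j) := by
  refine summable_of_ne_finset_zero (s := {j}) fun i hi => ?_
  simp only [Finset.mem_singleton] at hi
  simp [unitVec, hi, Real.zero_rpow hp0.ne']

lemma unitVec_pNorm {p : ℝ} (hp0 : 0 < p) (j : ℕ) : pNorm p (unitVec j) = 1 := by
  unfold pNorm
  have : ∑' i, |unitVec j i| ^ p = 1 := by
    rw [tsum_eq_sum (s := {j}) (fun i hi => by
      simp only [Finset.mem_singleton] at hi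
      simp [unitVec, hi, Real.zero_rpow hp0.ne'])]
    simp [unitVec]
  rw [this, Real.one_rpow]

lemma memLp_smul_unitVec {p : ℝ} (hp0 : 0 < p) (c : ℝ) (N : ℕ) :
    MemLpSeq p (fun i => c * unitVec N i) := by
  refine summable_of_ne_finset_zero (s := {N}) fun i hi => ?_
  simp only [Finset.mem_singleton] at hi
  simp [unitVec, hi, Real.zero_rpow hp0.ne']

lemma summable_abs_of_memLp {p : ℝ} (hp0 : 0 < p) (hp1 : p < 1) {f : ℕ → ℝ}
    (hf : MemLpSeq p f) : Summable fun j => |f j| := by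
  set S := ∑' j, |f j| ^ p with hS
  have hS0 : 0 ≤ S := tsum_nonneg fun j => Real.rpow_nonneg (abs_nonneg _) _
  set K := S ^ (1/p) with hK
  have hK0 : 0 ≤ K := Real.rpow_nonneg hS0 _
  have hle : ∀ j, |f j| ≤ K := by
    intro j
    have h1 : |f j| ^ p ≤ S := Summable.le_tsum hf j (fun i _ => Real.rpow_nonneg (abs_nonneg _) _)
    have h2 : (|f j| ^ p) ^ (1/p) ≤ K :=
      Real.rpow_le_rpow (Real.rpow_nonneg (abs_nonneg _) _) h1 (by positivity)
    rwa [← Real.rpow_mul (abs_nonneg _), mul_one_div_cancel hp0.ne', Real.rpow_one] at h2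
  refine Summable.of_nonneg_of_le (fun j => abs_nonneg _) (fun j => ?_) (hf.mul_right (K ^ (1-p)))
  rcases eq_or_lt_of_le (abs_nonneg (f j)) with h0 | h0
  · rw [← h0]
    positivity
  · calc |f j| = |f j| ^ p * |f j| ^ (1-p) := by
          rw [← Real.rpow_add h0]; norm_num
      _ ≤ |f j| ^ p * K ^ (1-p) := by
          refine mul_le_mul_of_nonneg_left ?_ (Real.rpow_nonneg (abs_nonneg _) _)
          exact Real.rpow_le_rpow (abs_nonneg _) (hle j) (by linarith)

lemma tsum_le_of_pNorm_le {p a : ℝ} (hp0 : 0 < p) {f : ℕ → ℝ}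
    (h : pNorm p f ≤ a) : ∑' j, |f j| ^ p ≤ a ^ p := by
  have hS : 0 ≤ ∑' j, |f j| ^ p := tsum_nonneg fun j => Real.rpow_nonneg (abs_nonneg _) _
  have h2 := Real.rpow_le_rpow (Real.rpow_nonneg hS _) h hp0.le
  rwa [← Real.rpow_mul hS, one_div, inv_mul_cancel₀ hp0.ne', Real.rpow_one] at h2

lemma phi_repr {p b : ℝ} (hp0 : 0 < p) (φ : (ℕ → ℝ) → ℝ) (y : ℕ → ℝ)
    (hy : MemLpSeq p y)
    (hadd : ∀ f g : ℕ → ℝ, MemLpSeq p f → MemLpSeq p g → φ (f + g) = φ f + φ g)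
    (hsmul : ∀ (c : ℝ) (f : ℕ → ℝ), MemLpSeq p f → φ (fun j => c * f j) = c * φ f)
    (hbdd : ∀ f : ℕ → ℝ, MemLpSeq p f → |φ f| ≤ b * pNorm p f)
    (hg : Summable fun j => φ (unitVec j) * y j) :
    φ y = ∑' j, φ (unitVec j) * y j := by
  classical
  have hsmem : ∀ N, MemLpSeq p (fun i => if i < N then y i else 0) := by
    intro N
    refine memLpSeq_of_le hp0 (fun i => ?_) hy
    split <;> simp [abs_nonneg]
  have htmem : ∀ N, MemLpSeq p (fun i => if i < N then 0 else y i) := by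
    intro N
    refine memLpSeq_of_le hp0 (fun i => ?_) hy
    split <;> simp [abs_nonneg]
  have hzero : φ (fun _ => 0) = 0 := by
    have h := hsmul 0 (fun _ => (0:ℝ)) (memLpSeq_zero hp0)
    simpa using h
  have hsN : ∀ N, φ (fun i => if i < N then y i else 0)
      = ∑ j ∈ Finset.range N, φ (unitVec j) * y j := by
    intro N
    induction N with
    | zero =>
        have h0 : (fun i => if i < 0 then y i else 0) = fun _ => (0:ℝ) := by
          funext i; simp
        rw [h0, hzero]; simp
    | succ N ih =>
        have hfun : (fun i => if i < N + 1 then y i else 0)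
            = (fun i => if i < N then y i else 0) + (fun i => y N * unitVec N i) := by
          funext i
          simp only [Pi.add_apply, unitVec]
          by_cases h1 : i < N
          · rw [if_pos h1, if_pos (by omega), if_neg (by omega), mul_zero, add_zero]
          · by_cases h2 : i = N
            · subst h2; simp
            · rw [if_neg (by omega), if_neg h1, if_neg h2, mul_zero, add_zero]
        rw [hfun, hadd _ _ (hsmem N) (memLp_smul_unitVec hp0 _ _), ih,
          hsmul _ _ (unitVec_memLp hp0 N), Finset.sum_range_succ, mul_comm]
  have hdecomp : ∀ N, φ y = φ (fun i => if i < N then 0 else y i)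
      + φ (fun i => if i < N then y i else 0) := by
    intro N
    have hfun : y = (fun i => if i < N then 0 else y i) + (fun i => if i < N then y i else 0) := by
      funext i
      simp only [Pi.add_apply]
      by_cases h : i < N <;> simp [h]
    conv_lhs => rw [hfun]
    exact hadd _ _ (htmem N) (hsmem N)
  have htail : Tendsto (fun N => ∑' j, |(if j < N then 0 else y j)| ^ p) atTop (𝓝 0) := by
    have key : ∀ N, ∑ j ∈ Finset.range N, |y j| ^ p
        + ∑' j, |(if j < N then 0 else y j)| ^ p = ∑' j, |y j| ^ p := by
      intro N
      have h1 : (∑' j, |(if j < N then y j else 0)| ^ p)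
          = ∑ j ∈ Finset.range N, |y j| ^ p := by
        rw [tsum_eq_sum (s := Finset.range N) (fun i hi => by
          simp only [Finset.mem_range, not_lt] at hi
          rw [if_neg (by omega), abs_zero, Real.zero_rpow hp0.ne'])]
        refine Finset.sum_congr rfl fun i hi => ?_
        simp only [Finset.mem_range] at hi
        rw [if_pos hi]
      have h2 : (fun j => |y j| ^ p) = (fun j => |(if j < N then y j else 0)| ^ p)
          + (fun j => |(if j < N then 0 else y j)| ^ p) := by
        funext j
        simp only [Pi.add_apply]
        by_cases h : j < N <;> simp [h, Real.zero_rpow hp0.ne']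
      calc ∑ j ∈ Finset.range N, |y j| ^ p + ∑' j, |(if j < N then 0 else y j)| ^ p
          = ∑' j, |(if j < N then y j else 0)| ^ p
            + ∑' j, |(if j < N then 0 else y j)| ^ p := by rw [h1]
        _ = ∑' j, (|(if j < N then y j else 0)| ^ p + |(if j < N then 0 else y j)| ^ p) :=
            (Summable.tsum_add (hsmem N) (htmem N)).symm
        _ = ∑' j, |y j| ^ p := tsum_congr fun j => by
            by_cases h : j < N <;> simp [h, Real.zero_rpow hp0.ne']
    have hT : Tendsto (fun N => ∑ j ∈ Finset.range N, |y j| ^ p) atTop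
        (𝓝 (∑' j, |y j| ^ p)) := hy.hasSum.tendsto_sum_nat
    have h0 : Tendsto (fun N => (∑' j, |y j| ^ p) - ∑ j ∈ Finset.range N, |y j| ^ p)
        atTop (𝓝 0) := by
      simpa using (tendsto_const_nhds (x := ∑' j, |y j| ^ p)).sub hT
    refine h0.congr fun N => ?_
    linarith [key N]
  have hpt : Tendsto (fun N => b * pNorm p (fun i => if i < N then 0 else y i)) atTop (𝓝 0) := by
    have h1 : Tendsto (fun N => pNorm p (fun i => if i < N then 0 else y i)) atTop (𝓝 0) := by
      have := htail.rpow_const (p := 1/p) (Or.inr (by positivity))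
      rwa [Real.zero_rpow (by positivity : (1:ℝ)/p ≠ 0)] at this
    simpa using h1.const_mul b
  have hsqueeze : Tendsto (fun N => |φ y - φ (fun i => if i < N then y i else 0)|) atTop (𝓝 0) := by
    refine squeeze_zero (fun N => abs_nonneg _) (fun N => ?_) hpt
    rw [hdecomp N]
    simpa using hbdd _ (htmem N)
  have h1 : Tendsto (fun N => φ (fun i => if i < N then y i else 0)) atTop (𝓝 (φ y)) := by
    rw [tendsto_iff_dist_tendsto_zero]
    refine hsqueeze.congr fun N => ?_
    rw [Real.dist_eq, abs_sub_comm]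
  have h2 : Tendsto (fun N => φ (fun i => if i < N then y i else 0)) atTop
      (𝓝 (∑' j, φ (unitVec j) * y j)) :=
    hg.hasSum.tendsto_sum_nat.congr fun N => (hsN N).symm
  exact tendsto_nhds_unique h1 h2

lemma indicator_abs (s : Set ℕ) (f : ℕ → ℝ) (j : ℕ) :
    |s.indicator f j| = s.indicator (fun j => |f j|) j := by
  by_cases h : j ∈ s <;> simp [Set.indicator_of_mem, Set.indicator_of_notMem, h]

lemma main_aux (C δ : ℝ) (hC : 1 < C) (A : Finset ℕ) (g : ℕ → ℕ → ℝ)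
    (hsum : ∀ n ∈ A, Summable fun j => |g n j|)
    (hrep : ∀ n ∈ A, (∑' j, g n j) = 1)
    (hsmall : ∀ n ∈ A,
      ∑' j, ({j : ℕ | ∃ m ∈ A, δ ≤ |g m j|}ᶜ.indicator (fun j => |g n j|)) j ≤ (C - 1) / C) :
    (A.card : ℝ) ≤ C * ∑' j : ℕ,
      Set.indicator {j : ℕ | ∃ n ∈ A, δ ≤ |g n j|} (fun j => |∑ n ∈ A, g n j|) j := by
  classical
  have hC0 : (0:ℝ) < C := lt_trans one_pos hC
  set Ω : Set ℕ := {j : ℕ | ∃ n ∈ A, δ ≤ |g n j|} with hΩ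
  have hgsum : ∀ n ∈ A, Summable (g n) := fun n hn => (hsum n hn).of_abs
  have hlarge : ∀ n ∈ A, 1 / C ≤ ∑' j, Ω.indicator (g n) j := by
    intro n hn
    have hI : Summable (Ω.indicator (g n)) := (hgsum n hn).indicator Ω
    have hIc : Summable (Ωᶜ.indicator (g n)) := (hgsum n hn).indicator Ωᶜ
    have hsplit : ∑' j, Ω.indicator (g n) j + ∑' j, Ωᶜ.indicator (g n) j = 1 := by
      rw [← hrep n hn, ← Summable.tsum_add hI hIc]
      exact tsum_congr fun j => by
        have := Set.indicator_self_add_compl Ω (g n)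
        exact congrFun this j
    have habs : |∑' j, Ωᶜ.indicator (g n) j| ≤ (C - 1) / C := by
      have hs2 : Summable fun j => |Ωᶜ.indicator (g n) j| :=
        ((hsum n hn).indicator Ωᶜ).congr fun j => (indicator_abs _ _ _).symm
      calc |∑' j, Ωᶜ.indicator (g n) j| ≤ ∑' j, |Ωᶜ.indicator (g n) j| := by
            have := norm_tsum_le_tsum_norm (f := Ωᶜ.indicator (g n))
              (by simpa [Real.norm_eq_abs] using hs2)
            simpa [Real.norm_eq_abs] using this
        _ = ∑' j, Ωᶜ.indicator (fun j => |g n j|) j :=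
            tsum_congr fun j => indicator_abs _ _ _
        _ ≤ (C - 1) / C := hsmall n hn
    have h1 : (C - 1) / C + 1 / C = 1 := by field_simp; ring
    have := abs_le.1 habs
    linarith [hsplit, this.1, this.2]
  have hindsum : ∀ j, ∑ n ∈ A, Ω.indicator (g n) j
      = Ω.indicator (fun j => ∑ n ∈ A, g n j) j := by
    intro j
    by_cases hj : j ∈ Ω <;> simp [Set.indicator_of_mem, Set.indicator_of_notMem, hj]
  have hRHSsum : Summable (Ω.indicator (fun j => |∑ n ∈ A, g n j|)) := by
    refine Summable.of_nonneg_of_le (fun j => ?_) (fun j => ?_) (summable_sum (fun n hn => hsum n hn))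
    · exact Set.indicator_nonneg (fun j _ => abs_nonneg _) j
    · by_cases hj : j ∈ Ω
      · rw [Set.indicator_of_mem hj]
        exact Finset.abs_sum_le_sum_abs _ _
      · rw [Set.indicator_of_notMem hj]
        exact Finset.sum_nonneg fun n _ => abs_nonneg _
  have hLHSsum : Summable (fun j => ∑ n ∈ A, Ω.indicator (g n) j) :=
    summable_sum (fun n hn => (hgsum n hn).indicator Ω)
  have hmain : (A.card : ℝ) / C ≤ ∑' j, Ω.indicator (fun j => |∑ n ∈ A, g n j|) j := by
    calc (A.card : ℝ) / C = ∑ n ∈ A, 1 / C := by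
          rw [Finset.sum_const, nsmul_eq_mul]; ring
      _ ≤ ∑ n ∈ A, ∑' j, Ω.indicator (g n) j := Finset.sum_le_sum fun n hn => hlarge n hn
      _ = ∑' j, ∑ n ∈ A, Ω.indicator (g n) j :=
          (Summable.tsum_finsetSum (fun n hn => (hgsum n hn).indicator Ω)).symm
      _ ≤ ∑' j, Ω.indicator (fun j => |∑ n ∈ A, g n j|) j := by
          refine Summable.tsum_le_tsum (fun j => ?_) hLHSsum hRHSsum
          rw [hindsum j]
          by_cases hj : j ∈ Ω
          · rw [Set.indicator_of_mem hj, Set.indicator_of_mem hj]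
            exact le_abs_self _
          · rw [Set.indicator_of_notMem hj, Set.indicator_of_notMem hj]
    
  rw [div_le_iff₀ hC0] at hmain
  calc (A.card : ℝ) ≤ (∑' j, Ω.indicator (fun j => |∑ n ∈ A, g n j|) j) * C := hmain
    _ = C * ∑' j, Ω.indicator (fun j => |∑ n ∈ A, g n j|) j := mul_comm _ _

lemma key_alg (p a b C : ℝ) (hp0 : 0 < p) (hp1 : p < 1) (ha : 0 < a) (hb : 0 < b) (hC : 1 < C) :
    (((C - 1) / C) * ((C - 1) / (C * a * b)) ^ (p / (1 - p))) ^ (1 - p) * (b ^ p * a ^ p)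
      = (C - 1) / C := by
  have hC0 : (0:ℝ) < C := lt_trans one_pos hC
  have hk : (0:ℝ) < (C - 1) / C := div_pos (by linarith) hC0
  have hε : (0:ℝ) < (C - 1) / (C * a * b) := div_pos (by linarith) (by positivity)
  have h1p : (0:ℝ) < 1 - p := by linarith
  have hab : (0:ℝ) < a ^ p * b ^ p := by positivity
  have hsplit : (C - 1) / (C * a * b) = ((C - 1) / C) / (a * b) := by
    rw [div_div, mul_assoc]
  calc (((C - 1) / C) * ((C - 1) / (C * a * b)) ^ (p / (1 - p))) ^ (1 - p) * (b ^ p * a ^ p)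
      = (((C - 1) / C) ^ (1 - p) * (((C - 1) / (C * a * b)) ^ (p / (1 - p))) ^ (1 - p))
        * (b ^ p * a ^ p) := by
        rw [Real.mul_rpow hk.le (Real.rpow_nonneg hε.le _)]
    _ = (((C - 1) / C) ^ (1 - p) * ((C - 1) / (C * a * b)) ^ p) * (b ^ p * a ^ p) := by
        rw [← Real.rpow_mul hε.le, div_mul_cancel₀ _ h1p.ne']
    _ = (((C - 1) / C) ^ (1 - p) * (((C - 1) / C) ^ p / (a ^ p * b ^ p))) * (b ^ p * a ^ p) := by
        rw [hsplit, Real.div_rpow hk.le (by positivity), Real.mul_rpow ha.le hb.le]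
    _ = (((C - 1) / C) ^ (1 - p) * ((C - 1) / C) ^ p) * ((a ^ p * b ^ p) / (a ^ p * b ^ p)) := by
        ring
    _ = (C - 1) / C := by
        rw [div_self hab.ne', mul_one, ← Real.rpow_add hk]
        norm_num


/-- Lemma 3.4 of the paper, instantiated in `ℓ_p` (`0<p<1`): with
`ε = (C-1)/(C·a·b)` and `δ = ((C-1)/C)·ε^(p/(1-p))`, for any finite family
`(x_n, x_n^*)_{n ∈ A}` with `x_n^*(x_n) = 1`, `‖x_n‖_p ≤ a`, `‖x_n^*‖ ≤ b`,
one has `|A| ≤ C · ∑_{j ∈ Ω_δ} |∑_{n ∈ A} x_n^*(e_j)·x_n(j)|`. -/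
theorem stmt2 (p a b C : ℝ) (hp0 : 0 < p) (hp1 : p < 1)
    (ha : 0 < a) (hb : 0 < b) (hC : 1 < C)
    (A : Finset ℕ) (x : ℕ → ℕ → ℝ) (xs : ℕ → (ℕ → ℝ) → ℝ)
    (hxmem : ∀ n ∈ A, MemLpSeq p (x n))
    (hxnorm : ∀ n ∈ A, pNorm p (x n) ≤ a)
    (hadd : ∀ n ∈ A, ∀ f g : ℕ → ℝ, MemLpSeq p f → MemLpSeq p g →
      xs n (f + g) = xs n f + xs n g)
    (hsmul : ∀ n ∈ A, ∀ (c : ℝ) (f : ℕ → ℝ), MemLpSeq p f →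
      xs n (fun j => c * f j) = c * xs n f)
    (hbdd : ∀ n ∈ A, ∀ f : ℕ → ℝ, MemLpSeq p f → |xs n f| ≤ b * pNorm p f)
    (hone : ∀ n ∈ A, xs n (x n) = 1) :
    (A.card : ℝ) ≤ C * ∑' j : ℕ,
      Set.indicator
        {j : ℕ | ∃ n ∈ A,
          ((C - 1) / C) * ((C - 1) / (C * a * b)) ^ (p / (1 - p)) ≤ |xs n (unitVec j) * x n j|}
        (fun j => |∑ n ∈ A, xs n (unitVec j) * x n j|) j := by
  classical
  have hC0 : (0:ℝ) < C := lt_trans one_pos hC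
  set δ : ℝ := ((C - 1) / C) * ((C - 1) / (C * a * b)) ^ (p / (1 - p)) with hδdef
  have hδpos : 0 < δ := by
    rw [hδdef]
    have hk : (0:ℝ) < (C - 1) / C := div_pos (by linarith) hC0
    have hε : (0:ℝ) < (C - 1) / (C * a * b) := div_pos (by linarith) (by positivity)
    positivity
  have hxb : ∀ n ∈ A, ∀ j, |xs n (unitVec j)| ≤ b := by
    intro n hn j
    have := hbdd n hn (unitVec j) (unitVec_memLp hp0 j)
    rwa [unitVec_pNorm hp0, mul_one] at this
  have habs : ∀ n ∈ A, Summable fun j => |x n j| := fun n hn =>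
    summable_abs_of_memLp hp0 hp1 (hxmem n hn)
  have hgabs : ∀ n ∈ A, Summable fun j => |xs n (unitVec j) * x n j| := by
    intro n hn
    refine Summable.of_nonneg_of_le (fun j => abs_nonneg _) (fun j => ?_) ((habs n hn).mul_left b)
    rw [abs_mul]
    exact mul_le_mul_of_nonneg_right (hxb n hn j) (abs_nonneg _)
  have hrep : ∀ n ∈ A, (∑' j, xs n (unitVec j) * x n j) = 1 := by
    intro n hn
    rw [← phi_repr hp0 (xs n) (x n) (hxmem n hn) (hadd n hn) (hsmul n hn) (hbdd n hn)
      ((hgabs n hn).of_abs)]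
    exact hone n hn
  have hptw : ∀ n ∈ A, ∀ j, |xs n (unitVec j) * x n j| ^ p ≤ b ^ p * |x n j| ^ p := by
    intro n hn j
    calc |xs n (unitVec j) * x n j| ^ p ≤ (b * |x n j|) ^ p := by
          refine Real.rpow_le_rpow (abs_nonneg _) ?_ hp0.le
          rw [abs_mul]; exact mul_le_mul_of_nonneg_right (hxb n hn j) (abs_nonneg _)
      _ = b ^ p * |x n j| ^ p := Real.mul_rpow hb.le (abs_nonneg _)
  have hgp : ∀ n ∈ A, Summable fun j => |xs n (unitVec j) * x n j| ^ p := by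
    intro n hn
    exact Summable.of_nonneg_of_le (fun j => Real.rpow_nonneg (abs_nonneg _) _)
      (hptw n hn) ((hxmem n hn).mul_left (b ^ p))
  have htsum_gp : ∀ n ∈ A, ∑' j, |xs n (unitVec j) * x n j| ^ p ≤ b ^ p * a ^ p := by
    intro n hn
    calc ∑' j, |xs n (unitVec j) * x n j| ^ p ≤ ∑' j, b ^ p * |x n j| ^ p :=
          Summable.tsum_le_tsum (hptw n hn) (hgp n hn) ((hxmem n hn).mul_left _)
      _ = b ^ p * ∑' j, |x n j| ^ p := tsum_mul_left
      _ ≤ b ^ p * a ^ p := mul_le_mul_of_nonneg_left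
          (tsum_le_of_pNorm_le hp0 (hxnorm n hn)) (by positivity)
  have hsmall : ∀ n ∈ A,
      ∑' j, ({j : ℕ | ∃ m ∈ A, δ ≤ |xs m (unitVec j) * x m j|}ᶜ.indicator
        (fun j => |xs n (unitVec j) * x n j|)) j ≤ (C - 1) / C := by
    intro n hn
    set Ω : Set ℕ := {j : ℕ | ∃ m ∈ A, δ ≤ |xs m (unitVec j) * x m j|} with hΩdef
    have hpoint : ∀ j, Ωᶜ.indicator (fun j => |xs n (unitVec j) * x n j|) j
        ≤ δ ^ (1 - p) * |xs n (unitVec j) * x n j| ^ p := by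
      intro j
      by_cases hj : j ∈ Ωᶜ
      · rw [Set.indicator_of_mem hj]
        have hlt : |xs n (unitVec j) * x n j| < δ := by
          by_contra hcon
          exact hj ⟨n, hn, not_lt.1 hcon⟩
        rcases eq_or_lt_of_le (abs_nonneg (xs n (unitVec j) * x n j)) with h0 | h0
        · rw [← h0, Real.zero_rpow hp0.ne', mul_zero]
        · calc |xs n (unitVec j) * x n j|
              = |xs n (unitVec j) * x n j| ^ (1 - p) * |xs n (unitVec j) * x n j| ^ p := by
                rw [← Real.rpow_add h0]; norm_num
            _ ≤ δ ^ (1 - p) * |xs n (unitVec j) * x n j| ^ p :=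
                mul_le_mul_of_nonneg_right
                  (Real.rpow_le_rpow (abs_nonneg _) hlt.le (by linarith))
                  (Real.rpow_nonneg (abs_nonneg _) _)
      · rw [Set.indicator_of_notMem hj]
        positivity
    calc ∑' j, (Ωᶜ.indicator (fun j => |xs n (unitVec j) * x n j|)) j
        ≤ ∑' j, δ ^ (1 - p) * |xs n (unitVec j) * x n j| ^ p :=
          Summable.tsum_le_tsum hpoint ((hgabs n hn).indicator Ωᶜ) ((hgp n hn).mul_left _)
      _ = δ ^ (1 - p) * ∑' j, |xs n (unitVec j) * x n j| ^ p := tsum_mul_left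
      _ ≤ δ ^ (1 - p) * (b ^ p * a ^ p) := mul_le_mul_of_nonneg_left (htsum_gp n hn)
          (Real.rpow_nonneg hδpos.le _)
      _ = (C - 1) / C := by rw [hδdef]; exact key_alg p a b C hp0 hp1 ha hb hC
  exact main_aux C δ hC A (fun n j => xs n (unitVec j) * x n j) hgabs hrep hsmall
end

section
/- Let 0<p<1 and let (x_n)_{n∈ℕ} be a sequence in ℓ_p that is suppression unconditional for constant coefficients in the following sense: there is C₀ ≥ 1 such that for every finite A ⊆ ℕ and all choices of signs (θ_n)_{n∈A}, (ε_n)_{n∈A} ∈ {−1,1}^A, ‖Σ_{n∈A} θ_n x_n‖_p ≤ C₀ ‖Σ_{n∈A} ε_n x_n‖_p. Then there exist constants 0<c≤C<∞, depending only on p and C₀, such that for every finite A ⊆ ℕ: c·( Σ_j ( Σ_{n∈A} x_n(j)² )^{p/2} )^{1/p} ≤ ‖ Σ_{n∈A} x_n ‖_p ≤ C·( Σ_j ( Σ_{n∈A} x_n(j)² )^{p/2} )^{1/p}. -/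
open scoped BigOperators

open Finset

noncomputable def sgn (S : Finset ℕ) (n : ℕ) : ℝ := if n ∈ S then 1 else -1

lemma sgn_sq (S : Finset ℕ) (n : ℕ) : sgn S n ^ 2 = 1 := by
  unfold sgn; split <;> norm_num

lemma abs_sgn (S : Finset ℕ) (n : ℕ) : |sgn S n| = 1 := by
  unfold sgn; split <;> norm_num

lemma sum_powerset_signs (f : ℝ → ℝ) (a : ℕ → ℝ) {m : ℕ} {B : Finset ℕ} (hm : m ∉ B) :
    ∑ S ∈ (insert m B).powerset, f (∑ n ∈ insert m B, sgn S n * a n)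
    = ∑ S ∈ B.powerset, (f ((∑ n ∈ B, sgn S n * a n) - a m)
        + f ((∑ n ∈ B, sgn S n * a n) + a m)) := by
  rw [Finset.sum_powerset_insert hm, Finset.sum_add_distrib]
  congr 1
  · apply Finset.sum_congr rfl
    intro S hS
    have hmS : m ∉ S := fun h => hm (Finset.mem_powerset.1 hS h)
    congr 1
    rw [Finset.sum_insert hm]
    have : sgn S m = -1 := by simp [sgn, hmS]
    rw [this]; ring
  · apply Finset.sum_congr rfl
    intro S hS
    congr 1
    rw [Finset.sum_insert hm]
    have h1 : sgn (insert m S) m = 1 := by simp [sgn]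
    have h2 : ∀ n ∈ B, sgn (insert m S) n * a n = sgn S n * a n := by
      intro n hn
      have : n ≠ m := fun h => hm (h ▸ hn)
      simp [sgn, Finset.mem_insert, this]
    rw [h1, Finset.sum_congr rfl h2]; ring

lemma second_moment (a : ℕ → ℝ) (A : Finset ℕ) :
    ∑ S ∈ A.powerset, (∑ n ∈ A, sgn S n * a n) ^ 2
      = 2 ^ A.card * ∑ n ∈ A, a n ^ 2 := by
  induction A using Finset.induction_on with
  | empty => simp
  | @insert m B hm ih =>
    rw [sum_powerset_signs (fun t => t ^ 2) a hm]
    have : ∀ S ∈ B.powerset,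
        ((∑ n ∈ B, sgn S n * a n) - a m) ^ 2 + ((∑ n ∈ B, sgn S n * a n) + a m) ^ 2
        = 2 * (∑ n ∈ B, sgn S n * a n) ^ 2 + 2 * a m ^ 2 := by
      intro S _; ring
    rw [Finset.sum_congr rfl this, Finset.sum_add_distrib, ← Finset.mul_sum, ih,
      Finset.sum_const, Finset.card_powerset, Finset.card_insert_of_notMem hm,
      Finset.sum_insert hm]
    push_cast
    ring

lemma fourth_moment (a : ℕ → ℝ) (A : Finset ℕ) :
    ∑ S ∈ A.powerset, (∑ n ∈ A, sgn S n * a n) ^ 4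
      ≤ 3 * 2 ^ A.card * (∑ n ∈ A, a n ^ 2) ^ 2 := by
  induction A using Finset.induction_on with
  | empty => simp
  | @insert m B hm ih =>
    rw [sum_powerset_signs (fun t => t ^ 4) a hm]
    have : ∀ S ∈ B.powerset,
        ((∑ n ∈ B, sgn S n * a n) - a m) ^ 4 + ((∑ n ∈ B, sgn S n * a n) + a m) ^ 4
        = 2 * (∑ n ∈ B, sgn S n * a n) ^ 4 + 12 * a m ^ 2 * (∑ n ∈ B, sgn S n * a n) ^ 2
          + 2 * a m ^ 4 := by
      intro S _; ring
    rw [Finset.sum_congr rfl this]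
    have hQ : (0:ℝ) ≤ ∑ n ∈ B, a n ^ 2 := Finset.sum_nonneg fun n _ => sq_nonneg _
    calc ∑ S ∈ B.powerset, (2 * (∑ n ∈ B, sgn S n * a n) ^ 4
          + 12 * a m ^ 2 * (∑ n ∈ B, sgn S n * a n) ^ 2 + 2 * a m ^ 4)
        = 2 * (∑ S ∈ B.powerset, (∑ n ∈ B, sgn S n * a n) ^ 4)
          + 12 * a m ^ 2 * (∑ S ∈ B.powerset, (∑ n ∈ B, sgn S n * a n) ^ 2)
          + 2 ^ B.card * (2 * a m ^ 4) := by
          rw [Finset.sum_add_distrib, Finset.sum_add_distrib, ← Finset.mul_sum, ← Finset.mul_sum,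
            Finset.sum_const, Finset.card_powerset]
          push_cast; ring
      _ ≤ 2 * (3 * 2 ^ B.card * (∑ n ∈ B, a n ^ 2) ^ 2)
          + 12 * a m ^ 2 * (2 ^ B.card * ∑ n ∈ B, a n ^ 2)
          + 2 ^ B.card * (2 * a m ^ 4) := by
          rw [second_moment]
          have h2 : (0:ℝ) ≤ 12 * a m ^ 2 := by positivity
          nlinarith [ih, sq_nonneg (a m)]
      _ ≤ 3 * 2 ^ (insert m B).card * (∑ n ∈ insert m B, a n ^ 2) ^ 2 := by
          rw [Finset.card_insert_of_notMem hm, Finset.sum_insert hm]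
          have h2 : (0:ℝ) < 2 ^ B.card := by positivity
          have h3 : (2:ℝ) ^ (B.card + 1) = 2 * 2 ^ B.card := by ring
          rw [h3]
          nlinarith [mul_nonneg h2.le (sq_nonneg (a m ^ 2))]

lemma rpow_two_add {q : ℝ} (hq0 : 0 ≤ q) (hq1 : q ≤ 1) {a b : ℝ} (ha : 0 ≤ a) (hb : 0 ≤ b) :
    (a + b) ^ q ≤ a ^ q + b ^ q := by
  have h := NNReal.rpow_add_le_add_rpow a.toNNReal b.toNNReal hq0 hq1
  rw [← Real.toNNReal_add ha hb] at h
  have h2 := NNReal.coe_le_coe.2 h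
  rw [NNReal.coe_add] at h2
  simpa [NNReal.coe_rpow, Real.coe_toNNReal _ (add_nonneg ha hb),
    Real.coe_toNNReal _ ha, Real.coe_toNNReal _ hb] using h2

lemma rpow_sum_le {q : ℝ} (hq0 : 0 < q) (hq1 : q ≤ 1) (s : Finset ℕ) (u : ℕ → ℝ)
    (hu : ∀ n, 0 ≤ u n) :
    (∑ n ∈ s, u n) ^ q ≤ ∑ n ∈ s, u n ^ q := by
  induction s using Finset.induction_on with
  | empty => simp [Real.zero_rpow (ne_of_gt hq0)]
  | @insert m B hm ih =>
    rw [Finset.sum_insert hm, Finset.sum_insert hm]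
    calc (u m + ∑ n ∈ B, u n) ^ q ≤ u m ^ q + (∑ n ∈ B, u n) ^ q :=
          rpow_two_add hq0.le hq1 (hu m) (Finset.sum_nonneg fun n _ => hu n)
      _ ≤ u m ^ q + ∑ n ∈ B, u n ^ q := by linarith [ih]

lemma abs_rpow_eq_sq_rpow (p : ℝ) (t : ℝ) : |t| ^ p = (t ^ 2) ^ (p / 2) := by
  rw [← sq_abs, ← Real.rpow_natCast_mul (abs_nonneg t) 2 (p / 2)]
  congr 1
  push_cast
  ring

lemma khintchine_upper {p : ℝ} (hp0 : 0 < p) (hp1 : p < 1) (a : ℕ → ℝ) (A : Finset ℕ) :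
    ∑ S ∈ A.powerset, |∑ n ∈ A, sgn S n * a n| ^ p
      ≤ 2 ^ A.card * (∑ n ∈ A, a n ^ 2) ^ (p / 2) := by
  set N : ℝ := 2 ^ A.card with hN
  have hNpos : (0:ℝ) < N := by positivity
  have hw' : ∑ _S ∈ A.powerset, N⁻¹ = 1 := by
    rw [Finset.sum_const, Finset.card_powerset, nsmul_eq_mul]
    push_cast
    field_simp [hN]
    exact hN.symm
  have h2p : (1:ℝ) ≤ 2 / p := by
    rw [le_div_iff₀ hp0]; linarith
  have h := Real.arith_mean_le_rpow_mean (s := A.powerset) (fun _ => N⁻¹)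
    (fun S => |∑ n ∈ A, sgn S n * a n| ^ p) (fun _ _ => by positivity) hw'
    (fun S _ => by positivity) h2p
  have hz : ∀ S ∈ A.powerset,
      N⁻¹ * (|∑ n ∈ A, sgn S n * a n| ^ p) ^ (2 / p)
        = N⁻¹ * (∑ n ∈ A, sgn S n * a n) ^ 2 := by
    intro S _
    rw [← Real.rpow_mul (abs_nonneg _), show p * (2 / p) = 2 by field_simp,
      Real.rpow_two, sq_abs]
  rw [Finset.sum_congr rfl hz, ← Finset.mul_sum, ← Finset.mul_sum, second_moment,
    inv_mul_cancel_left₀ (ne_of_gt hNpos), one_div_div] at h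
  calc ∑ S ∈ A.powerset, |∑ n ∈ A, sgn S n * a n| ^ p
      = N * (N⁻¹ * ∑ S ∈ A.powerset, |∑ n ∈ A, sgn S n * a n| ^ p) := by
        field_simp
    _ ≤ N * (∑ n ∈ A, a n ^ 2) ^ (p / 2) := by
        apply mul_le_mul_of_nonneg_left _ hNpos.le
        exact h

lemma khintchine_lower {p : ℝ} (hp0 : 0 < p) (hp1 : p < 1) (a : ℕ → ℝ) (A : Finset ℕ) :
    2 ^ A.card * (∑ n ∈ A, a n ^ 2) ^ (p / 2) / 24
      ≤ ∑ S ∈ A.powerset, |∑ n ∈ A, sgn S n * a n| ^ p := by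
  set Q : ℝ := ∑ n ∈ A, a n ^ 2 with hQdef
  have hQ0 : 0 ≤ Q := Finset.sum_nonneg fun n _ => sq_nonneg _
  rcases eq_or_lt_of_le hQ0 with hQz | hQpos
  · -- Q = 0
    rw [← hQz, Real.zero_rpow (by positivity : p / 2 ≠ 0)]
    simp only [mul_zero, zero_div]
    exact Finset.sum_nonneg fun S _ => Real.rpow_nonneg (abs_nonneg _) _
  set N : ℝ := 2 ^ A.card with hN
  have hNpos : (0:ℝ) < N := by positivity
  set s : Finset ℕ → ℝ := fun S => ∑ n ∈ A, sgn S n * a n with hs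
  set B : Finset (Finset ℕ) := A.powerset.filter (fun S => Q / 2 ≤ s S ^ 2) with hB
  -- lower bound on sum of squares over B
  have hsplit : ∑ S ∈ A.powerset, s S ^ 2
      = (∑ S ∈ B, s S ^ 2) + ∑ S ∈ A.powerset.filter (fun S => ¬ (Q / 2 ≤ s S ^ 2)), s S ^ 2 := by
    rw [hB, Finset.sum_filter_add_sum_filter_not]
  have hcompl : ∑ S ∈ A.powerset.filter (fun S => ¬ (Q / 2 ≤ s S ^ 2)), s S ^ 2
      ≤ N * (Q / 2) := by
    calc ∑ S ∈ A.powerset.filter (fun S => ¬ (Q / 2 ≤ s S ^ 2)), s S ^ 2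
        ≤ ∑ _S ∈ A.powerset.filter (fun S => ¬ (Q / 2 ≤ s S ^ 2)), (Q / 2) := by
          apply Finset.sum_le_sum
          intro S hS
          have := (Finset.mem_filter.1 hS).2
          linarith [not_le.1 this]
      _ ≤ N * (Q / 2) := by
          rw [Finset.sum_const, nsmul_eq_mul]
          apply mul_le_mul_of_nonneg_right _ (by linarith)
          calc ((A.powerset.filter (fun S => ¬ (Q / 2 ≤ s S ^ 2))).card : ℝ)
              ≤ (A.powerset.card : ℝ) := by
                exact_mod_cast Nat.cast_le.2 (Finset.card_le_card (Finset.filter_subset _ _))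
            _ = N := by rw [Finset.card_powerset]; push_cast; rfl
  have hsq : ∑ S ∈ A.powerset, s S ^ 2 = N * Q := second_moment a A
  have hBsum : N * Q / 2 ≤ ∑ S ∈ B, s S ^ 2 := by
    have := hsplit
    rw [hsq] at this
    linarith
  -- Cauchy-Schwarz
  have hCS : (∑ S ∈ B, s S ^ 2) ^ 2 ≤ (B.card : ℝ) * ∑ S ∈ B, (s S ^ 2) ^ 2 := by
    exact sq_sum_le_card_mul_sum_sq (s := B) (f := fun S => s S ^ 2)
  have h4 : ∑ S ∈ B, (s S ^ 2) ^ 2 ≤ 3 * N * Q ^ 2 := by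
    calc ∑ S ∈ B, (s S ^ 2) ^ 2 = ∑ S ∈ B, s S ^ 4 := by
          apply Finset.sum_congr rfl; intro S _; ring
      _ ≤ ∑ S ∈ A.powerset, s S ^ 4 := by
          apply Finset.sum_le_sum_of_subset_of_nonneg (Finset.filter_subset _ _)
          intro S _ _
          positivity
      _ ≤ 3 * N * Q ^ 2 := fourth_moment a A
  have hK : N / 12 ≤ (B.card : ℝ) := by
    have h1 : (N * Q / 2) ^ 2 ≤ (∑ S ∈ B, s S ^ 2) ^ 2 :=
      pow_le_pow_left₀ (by positivity) hBsum 2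
    have h2 : (∑ S ∈ B, s S ^ 2) ^ 2 ≤ (B.card : ℝ) * (3 * N * Q ^ 2) :=
      hCS.trans (mul_le_mul_of_nonneg_left h4 (Nat.cast_nonneg _))
    have h3 : 0 < N * Q ^ 2 := by positivity
    nlinarith [h1, h2, h3]
  -- lower bound the p-sum
  have hterm : ∀ S ∈ B, (Q / 2) ^ (p / 2) ≤ |s S| ^ p := by
    intro S hS
    rw [abs_rpow_eq_sq_rpow]
    exact Real.rpow_le_rpow (by linarith) (Finset.mem_filter.1 hS).2 (by positivity)
  have hBsum2 : (B.card : ℝ) * (Q / 2) ^ (p / 2) ≤ ∑ S ∈ B, |s S| ^ p := by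
    calc (B.card : ℝ) * (Q / 2) ^ (p / 2) = ∑ _S ∈ B, (Q / 2) ^ (p / 2) := by
          rw [Finset.sum_const, nsmul_eq_mul]
      _ ≤ ∑ S ∈ B, |s S| ^ p := Finset.sum_le_sum hterm
  have hmono : ∑ S ∈ B, |s S| ^ p ≤ ∑ S ∈ A.powerset, |s S| ^ p := by
    apply Finset.sum_le_sum_of_subset_of_nonneg (Finset.filter_subset _ _)
    intro S _ _
    positivity
  have hhalf : Q ^ (p / 2) / 2 ≤ (Q / 2) ^ (p / 2) := by
    have h2 : (2:ℝ) ^ (p / 2) ≤ 2 := by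
      calc (2:ℝ) ^ (p / 2) ≤ (2:ℝ) ^ (1:ℝ) :=
            Real.rpow_le_rpow_of_exponent_le (by norm_num) (by linarith)
        _ = 2 := Real.rpow_one 2
    have h2pos : (0:ℝ) < (2:ℝ) ^ (p / 2) := Real.rpow_pos_of_pos (by norm_num) _
    rw [Real.div_rpow hQ0 (by norm_num : (0:ℝ) ≤ 2)]
    gcongr
  calc N * Q ^ (p / 2) / 24 = (N / 12) * (Q ^ (p / 2) / 2) := by ring
    _ ≤ (B.card : ℝ) * ((Q / 2) ^ (p / 2)) :=
        mul_le_mul hK hhalf (by positivity) (Nat.cast_nonneg _)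
    _ ≤ ∑ S ∈ B, |s S| ^ p := hBsum2
    _ ≤ ∑ S ∈ A.powerset, |s S| ^ p := hmono

lemma rpow_p_le {p C₀ X Y : ℝ} (hp0 : 0 < p) (hX : 0 ≤ X) (hY : 0 ≤ Y) (hC : 0 ≤ C₀)
    (h : X ^ (1/p) ≤ C₀ * Y ^ (1/p)) : X ≤ C₀ ^ p * Y := by
  have h2 := Real.rpow_le_rpow (Real.rpow_nonneg hX _) h hp0.le
  rw [← Real.rpow_mul hX, one_div_mul_cancel hp0.ne', Real.rpow_one,
    Real.mul_rpow hC (Real.rpow_nonneg hY _), ← Real.rpow_mul hY, one_div_mul_cancel hp0.ne',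
    Real.rpow_one] at h2
  exact h2

/-- Square-function estimate in `ℓ_p`, `0<p<1`, for sequences which are
suppression unconditional for constant coefficients (SUCC): the constants
`c, C` depend only on `p` and the SUCC constant `C₀`. -/
theorem stmt3 (p C₀ : ℝ) (hp0 : 0 < p) (hp1 : p < 1) (hC₀ : 1 ≤ C₀) :
    ∃ c C : ℝ, 0 < c ∧ c ≤ C ∧
      ∀ x : ℕ → ℕ → ℝ, (∀ n, MemLpSeq p (x n)) →
        (∀ A : Finset ℕ, ∀ θ ε : ℕ → ℝ,
          (∀ n ∈ A, θ n = 1 ∨ θ n = -1) → (∀ n ∈ A, ε n = 1 ∨ ε n = -1) →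
          pNorm p (fun j => ∑ n ∈ A, θ n * x n j)
            ≤ C₀ * pNorm p (fun j => ∑ n ∈ A, ε n * x n j)) →
        ∀ A : Finset ℕ,
          c * (∑' j, (∑ n ∈ A, x n j ^ 2) ^ (p / 2)) ^ (1 / p)
              ≤ pNorm p (fun j => ∑ n ∈ A, x n j) ∧
          pNorm p (fun j => ∑ n ∈ A, x n j)
              ≤ C * (∑' j, (∑ n ∈ A, x n j ^ 2) ^ (p / 2)) ^ (1 / p) := by
  have hC₀0 : (0:ℝ) < C₀ := lt_of_lt_of_le one_pos hC₀
  have hC₀p1 : (1:ℝ) ≤ C₀ ^ p := by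
    calc (1:ℝ) = 1 ^ p := (Real.one_rpow p).symm
      _ ≤ C₀ ^ p := Real.rpow_le_rpow zero_le_one hC₀ hp0.le
  have hC₀ppos : (0:ℝ) < C₀ ^ p := lt_of_lt_of_le one_pos hC₀p1
  refine ⟨((24:ℝ) * C₀ ^ p)⁻¹ ^ (1/p), C₀, ?_, ?_, ?_⟩
  · positivity
  · have h1 : ((24:ℝ) * C₀ ^ p)⁻¹ ≤ 1 := by
      rw [inv_le_one_iff₀]
      right; nlinarith
    calc ((24:ℝ) * C₀ ^ p)⁻¹ ^ (1/p) ≤ 1 := Real.rpow_le_one (by positivity) h1 (by positivity)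
      _ ≤ C₀ := hC₀
  intro x hmem hsucc A
  set Q : ℕ → ℝ := fun j => ∑ n ∈ A, x n j ^ 2 with hQ
  set T : ℝ := ∑' j, Q j ^ (p / 2) with hT
  have hvalid : ∀ S : Finset ℕ, ∀ n ∈ A, sgn S n = 1 ∨ sgn S n = -1 := by
    intro S n _
    unfold sgn
    split
    · exact Or.inl rfl
    · exact Or.inr rfl
  have hone : ∀ n ∈ A, (fun _ : ℕ => (1:ℝ)) n = 1 ∨ (fun _ : ℕ => (1:ℝ)) n = -1 :=
    fun n _ => Or.inl rfl
  -- summability facts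
  have hdom : Summable (fun j => ∑ n ∈ A, |x n j| ^ p) :=
    summable_sum fun n _ => hmem n
  have hFs : ∀ θ : ℕ → ℝ, (∀ n ∈ A, θ n = 1 ∨ θ n = -1) →
      Summable fun j => |∑ n ∈ A, θ n * x n j| ^ p := by
    intro θ hθ
    apply Summable.of_nonneg_of_le (fun j => Real.rpow_nonneg (abs_nonneg _) _) _ hdom
    intro j
    calc |∑ n ∈ A, θ n * x n j| ^ p
        ≤ (∑ n ∈ A, |θ n * x n j|) ^ p :=
          Real.rpow_le_rpow (abs_nonneg _) (Finset.abs_sum_le_sum_abs _ _) hp0.le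
      _ ≤ ∑ n ∈ A, |θ n * x n j| ^ p :=
          rpow_sum_le hp0 hp1.le A _ (fun n => abs_nonneg _)
      _ = ∑ n ∈ A, |x n j| ^ p := by
          apply Finset.sum_congr rfl
          intro n hn
          have : |θ n| = 1 := by rcases hθ n hn with h | h <;> simp [h]
          rw [abs_mul, this, one_mul]
  have hQs : Summable fun j => Q j ^ (p / 2) := by
    apply Summable.of_nonneg_of_le
      (fun j => Real.rpow_nonneg (Finset.sum_nonneg fun n _ => sq_nonneg _) _) _ hdom
    intro j
    calc Q j ^ (p / 2) ≤ ∑ n ∈ A, (x n j ^ 2) ^ (p / 2) :=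
          rpow_sum_le (by positivity) (by linarith) A _ (fun n => sq_nonneg _)
      _ = ∑ n ∈ A, |x n j| ^ p := by
          apply Finset.sum_congr rfl
          intro n _
          rw [abs_rpow_eq_sq_rpow]
  -- F θ notation
  set F : (ℕ → ℝ) → ℝ := fun θ => ∑' j, |∑ n ∈ A, θ n * x n j| ^ p with hF
  have hFnonneg : ∀ θ, 0 ≤ F θ :=
    fun θ => tsum_nonneg fun j => Real.rpow_nonneg (abs_nonneg _) _
  have hTnonneg : 0 ≤ T :=
    tsum_nonneg fun j => Real.rpow_nonneg (Finset.sum_nonneg fun n _ => sq_nonneg _) _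
  have hpN : ∀ θ : ℕ → ℝ, pNorm p (fun j => ∑ n ∈ A, θ n * x n j) = F θ ^ (1/p) := fun θ => rfl
  -- power-p comparisons from hsucc
  have hcomp : ∀ θ ε : ℕ → ℝ, (∀ n ∈ A, θ n = 1 ∨ θ n = -1) → (∀ n ∈ A, ε n = 1 ∨ ε n = -1) →
      F θ ≤ C₀ ^ p * F ε := by
    intro θ ε hθ hε
    exact rpow_p_le hp0 (hFnonneg θ) (hFnonneg ε) hC₀0.le
      (by rw [← hpN θ, ← hpN ε]; exact hsucc A θ ε hθ hε)
  set N : ℝ := 2 ^ A.card with hN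
  have hNpos : (0:ℝ) < N := by positivity
  -- swap sum and tsum
  have hswap : ∑ S ∈ A.powerset, F (sgn S)
      = ∑' j, ∑ S ∈ A.powerset, |∑ n ∈ A, sgn S n * x n j| ^ p :=
    (Summable.tsum_finsetSum fun S _ => hFs (sgn S) (hvalid S)).symm
  have hswapS : Summable fun j => ∑ S ∈ A.powerset, |∑ n ∈ A, sgn S n * x n j| ^ p :=
    summable_sum fun S _ => hFs (sgn S) (hvalid S)
  -- upper bound: ∑_S khintchine_upper
  have hup : ∑ S ∈ A.powerset, F (sgn S) ≤ N * T := by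
    rw [hswap]
    calc ∑' j, ∑ S ∈ A.powerset, |∑ n ∈ A, sgn S n * x n j| ^ p
        ≤ ∑' j, N * Q j ^ (p / 2) :=
          Summable.tsum_le_tsum (fun j => khintchine_upper hp0 hp1 (fun n => x n j) A)
            hswapS (hQs.mul_left N)
      _ = N * T := tsum_mul_left
  have hQs24 : Summable fun j => N * Q j ^ (p / 2) / 24 := by
    apply (hQs.mul_left (N / 24)).congr
    intro j
    ring
  have hlo : N / 24 * T ≤ ∑ S ∈ A.powerset, F (sgn S) := by
    rw [hswap]
    calc N / 24 * T = ∑' j, N / 24 * Q j ^ (p / 2) := tsum_mul_left.symm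
      _ = ∑' j, N * Q j ^ (p / 2) / 24 := by
          apply tsum_congr; intro j; ring
      _ ≤ ∑' j, ∑ S ∈ A.powerset, |∑ n ∈ A, sgn S n * x n j| ^ p :=
          Summable.tsum_le_tsum (fun j => khintchine_lower hp0 hp1 (fun n => x n j) A)
            hQs24 hswapS
  -- connect F one
  have hFone : pNorm p (fun j => ∑ n ∈ A, x n j) = F (fun _ => 1) ^ (1/p) := by
    rw [← hpN (fun _ => 1)]
    simp only [one_mul]
  -- main upper
  have hupper : F (fun _ => 1) ≤ C₀ ^ p * T := by
    have h1 : N * F (fun _ => 1) ≤ C₀ ^ p * (N * T) := by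
      calc N * F (fun _ => 1) = ∑ S ∈ A.powerset, F (fun _ => 1) := by
            rw [Finset.sum_const, Finset.card_powerset, nsmul_eq_mul, hN]
            push_cast; ring
        _ ≤ ∑ S ∈ A.powerset, C₀ ^ p * F (sgn S) :=
            Finset.sum_le_sum fun S _ => hcomp _ _ hone (hvalid S)
        _ = C₀ ^ p * ∑ S ∈ A.powerset, F (sgn S) := by rw [Finset.mul_sum]
        _ ≤ C₀ ^ p * (N * T) := mul_le_mul_of_nonneg_left hup hC₀ppos.le
    have := (mul_le_mul_iff_right₀ hNpos).1 (by linarith : N * F (fun _ => 1) ≤ N * (C₀ ^ p * T))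
    linarith
  -- main lower
  have hlower : T / (24 * C₀ ^ p) ≤ F (fun _ => 1) := by
    have h1 : N / 24 * T ≤ C₀ ^ p * (N * F (fun _ => 1)) := by
      calc N / 24 * T ≤ ∑ S ∈ A.powerset, F (sgn S) := hlo
        _ ≤ ∑ S ∈ A.powerset, C₀ ^ p * F (fun _ => 1) :=
            Finset.sum_le_sum fun S _ => hcomp _ _ (hvalid S) hone
        _ = C₀ ^ p * (N * F (fun _ => 1)) := by
            rw [Finset.sum_const, Finset.card_powerset, nsmul_eq_mul, hN]
            push_cast; ring
    rw [div_le_iff₀ (by positivity)]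
    nlinarith [hFnonneg (fun _ : ℕ => (1:ℝ)), hNpos]
  constructor
  · -- lower bound
    rw [hFone]
    calc ((24:ℝ) * C₀ ^ p)⁻¹ ^ (1/p) * T ^ (1/p)
        = (((24:ℝ) * C₀ ^ p)⁻¹ * T) ^ (1/p) :=
          (Real.mul_rpow (by positivity) hTnonneg).symm
      _ = (T / (24 * C₀ ^ p)) ^ (1/p) := by rw [inv_mul_eq_div]
      _ ≤ F (fun _ => 1) ^ (1/p) :=
          Real.rpow_le_rpow (by positivity) hlower (by positivity)
  · -- upper bound
    rw [hFone]
    calc F (fun _ => 1) ^ (1/p) ≤ (C₀ ^ p * T) ^ (1/p) :=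
          Real.rpow_le_rpow (hFnonneg _) hupper (by positivity)
      _ = C₀ * T ^ (1/p) := by
          rw [Real.mul_rpow hC₀ppos.le hTnonneg, ← Real.rpow_mul hC₀0.le,
            mul_one_div_cancel hp0.ne', Real.rpow_one]
end
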